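/- arXiv:2106.00485 — 2 statements merged into one kernel-verified Lean document; each statement's English description precedes it below -/
import Mathlib

section
/- Let H be a real Hilbert space and a : H × H → ℝ a bilinear form. Suppose there exist constants c₁ ≥ 0 and c* > 0 such that for all u ∈ H, a(u,u) ≥ c*‖u‖², and suppose s : H → ℝ is a seminorm such that for every u ∈ H and every θ ∈ (0,1) there exists w ∈ H with ‖w‖ = 1 and a(u,w) ≥ -c₁‖u‖ + θ·s(u). Then for every nonzero u ∈ H, sup over nonzero v ∈ H of a(u,v)/‖v‖ ≥ (c*/(c₁+1+c*))·(‖u‖ + s(u)). -/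
/-- abstract inf-sup theorem. The supremum over nonzero `v` of
`a u v / ‖v‖` being `≥ C (‖u‖ + s u)` is rendered as: every upper bound of the
set of Rayleigh quotients is `≥ C (‖u‖ + s u)`. -/
theorem stmt_0 {H : Type*} [NormedAddCommGroup H] [InnerProductSpace ℝ H] [CompleteSpace H]
    (a : H →ₗ[ℝ] H →ₗ[ℝ] ℝ) (c₁ cstar : ℝ) (hc₁ : 0 ≤ c₁) (hcstar : 0 < cstar)
    (hcoer : ∀ u : H, cstar * ‖u‖ ^ 2 ≤ a u u)
    (s : Seminorm ℝ H)
    (hw : ∀ u : H, ∀ θ ∈ Set.Ioo (0 : ℝ) 1,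
      ∃ w : H, ‖w‖ = 1 ∧ -c₁ * ‖u‖ + θ * s u ≤ a u w) :
    ∀ u : H, u ≠ 0 → ∀ r : ℝ, (∀ v : H, v ≠ 0 → a u v / ‖v‖ ≤ r) →
      (cstar / (c₁ + 1 + cstar)) * (‖u‖ + s u) ≤ r := by
  intro u hu r hr
  have hnu : (0:ℝ) < ‖u‖ := norm_pos_iff.mpr hu
  have hc1' : (0:ℝ) < c₁ + 1 := by linarith
  have hd : (0:ℝ) < c₁ + 1 + cstar := by linarith
  have hsu : (0:ℝ) ≤ s u := apply_nonneg s u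
  -- key inequality for each θ ∈ (0,1)
  have key : ∀ θ ∈ Set.Ioo (0:ℝ) 1,
      (cstar / (c₁ + 1 + cstar)) * (‖u‖ + θ * s u) ≤ r := by
    intro θ hθ
    obtain ⟨w, hw1, hauw⟩ := hw u θ hθ
    set α : ℝ := cstar * ‖u‖ / (c₁ + 1) with hα
    have hαpos : 0 < α := by positivity
    have hαc : α * (c₁ + 1) = cstar * ‖u‖ := by
      rw [hα, div_mul_cancel₀ _ hc1'.ne']
    set v : H := u + α • w with hv
    have hav : a u v = a u u + α * a u w := by
      simp [hv, map_add, map_smul, smul_eq_mul]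
    have hθs : 0 ≤ θ * s u := mul_nonneg hθ.1.le hsu
    have hnum : α * (‖u‖ + θ * s u) ≤ a u v := by
      have h1 := hcoer u
      have h2 : α * (-c₁ * ‖u‖ + θ * s u) ≤ α * a u w :=
        mul_le_mul_of_nonneg_left hauw hαpos.le
      rw [hav]
      nlinarith [sq_nonneg ‖u‖]
    have hnumpos : 0 < a u v :=
      lt_of_lt_of_le (by positivity) hnum
    have hvne : v ≠ 0 := by
      intro h
      rw [h] at hnumpos
      simp at hnumpos
    have hvnorm : 0 < ‖v‖ := norm_pos_iff.mpr hvne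
    have hvle : ‖v‖ ≤ ‖u‖ + α := by
      calc ‖v‖ ≤ ‖u‖ + ‖α • w‖ := norm_add_le _ _
        _ = ‖u‖ + α := by
            rw [norm_smul, hw1, Real.norm_eq_abs, abs_of_pos hαpos, mul_one]
    have hrv : a u v ≤ r * ‖v‖ := (div_le_iff₀ hvnorm).mp (hr v hvne)
    have hrpos : 0 < r := by
      by_contra h
      push_neg at h
      nlinarith
    have hfin : α * (‖u‖ + θ * s u) ≤ r * (‖u‖ + α) := by
      calc α * (‖u‖ + θ * s u) ≤ a u v := hnum
        _ ≤ r * ‖v‖ := hrv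
        _ ≤ r * (‖u‖ + α) := mul_le_mul_of_nonneg_left hvle hrpos.le
    rw [div_mul_eq_mul_div, div_le_iff₀ hd]
    -- multiply hfin by (c₁+1)/‖u‖
    have hfin' : α * (c₁ + 1) * (‖u‖ + θ * s u) ≤ r * (‖u‖ + α) * (c₁ + 1) := by
      nlinarith
    rw [hαc] at hfin'
    have hαu : α * (c₁ + 1) = cstar * ‖u‖ := hαc
    nlinarith [mul_pos hrpos hnu]
  -- pass to the limit θ → 1⁻
  have hlim : Filter.Tendsto (fun θ : ℝ => (cstar / (c₁ + 1 + cstar)) * (‖u‖ + θ * s u))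
      (nhdsWithin 1 (Set.Ioo (0:ℝ) 1)) (nhds ((cstar / (c₁ + 1 + cstar)) * (‖u‖ + s u))) := by
    have : Filter.Tendsto (fun θ : ℝ => (cstar / (c₁ + 1 + cstar)) * (‖u‖ + θ * s u))
        (nhds 1) (nhds ((cstar / (c₁ + 1 + cstar)) * (‖u‖ + 1 * s u))) := by
      apply Filter.Tendsto.const_mul
      exact (tendsto_const_nhds.add ((continuous_id.mul continuous_const).tendsto 1))
    simpa using this.mono_left nhdsWithin_le_nhds
  have : (nhdsWithin (1:ℝ) (Set.Ioo (0:ℝ) 1)).NeBot :=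
    right_nhdsWithin_Ioo_neBot (by norm_num)
  exact le_of_tendsto hlim (eventually_mem_nhdsWithin.mono key)
end

section
/- Let H be a real Hilbert space with norm ‖·‖, let a : H × H → ℝ be bilinear and bounded with constant c₁, coercive with constant c* > 0, and let s be a seminorm on H. Fix u ∈ H and θ ∈ (0,1), and suppose w ∈ H satisfies ‖w‖ = 1 and a(u,w) ≥ -c₁‖u‖ + θ s(u). Set α = c*‖u‖/(c₁+1) and v = u + αw. Then a(u,v) ≥ (c₁+1)^{-1} c* (‖u‖ + θ s(u)) ‖u‖ and ‖v‖ ≤ (c₁+1)^{-1}(c₁ + 1 + c*)‖u‖. -/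
/-- the quantitative test-function construction in the inf-sup
proof: with `α = c*‖u‖/(c₁+1)` and `v = u + α w`, one has
`a(u,v) ≥ (c₁+1)⁻¹ c* (‖u‖ + θ s(u)) ‖u‖` and `‖v‖ ≤ (c₁+1)⁻¹ (c₁+1+c*) ‖u‖`. -/
theorem stmt_14 {H : Type*} [NormedAddCommGroup H] [InnerProductSpace ℝ H] [CompleteSpace H]
    (a : H →ₗ[ℝ] H →ₗ[ℝ] ℝ) (c₁ cstar : ℝ) (hc₁ : 0 ≤ c₁) (hcstar : 0 < cstar)
    (hbdd : ∀ x y : H, |a x y| ≤ c₁ * ‖x‖ * ‖y‖)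
    (hcoer : ∀ x : H, cstar * ‖x‖ ^ 2 ≤ a x x)
    (s : Seminorm ℝ H)
    (u : H) (θ : ℝ) (hθ : θ ∈ Set.Ioo (0 : ℝ) 1)
    (w : H) (hw1 : ‖w‖ = 1) (hw2 : -c₁ * ‖u‖ + θ * s u ≤ a u w)
    (α : ℝ) (hα : α = cstar * ‖u‖ / (c₁ + 1))
    (v : H) (hv : v = u + α • w) :
    (c₁ + 1)⁻¹ * cstar * (‖u‖ + θ * s u) * ‖u‖ ≤ a u v ∧
      ‖v‖ ≤ (c₁ + 1)⁻¹ * (c₁ + 1 + cstar) * ‖u‖ := by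
  have hd : (0:ℝ) < c₁ + 1 := by linarith
  have hα0 : 0 ≤ α := by
    rw [hα]
    positivity
  have havu : a u v = a u u + α * a u w := by
    simp [hv]
  constructor
  · have h1 : cstar * ‖u‖ ^ 2 + α * (-c₁ * ‖u‖ + θ * s u) ≤ a u v := by
      rw [havu]
      exact add_le_add (hcoer u) (mul_le_mul_of_nonneg_left hw2 hα0)
    have h2 : (c₁ + 1)⁻¹ * cstar * (‖u‖ + θ * s u) * ‖u‖
        = cstar * ‖u‖ ^ 2 + α * (-c₁ * ‖u‖ + θ * s u) := by
      rw [hα]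
      field_simp
      ring
    linarith
  · have h3 : ‖v‖ ≤ ‖u‖ + α := by
      calc ‖v‖ ≤ ‖u‖ + ‖α • w‖ := hv ▸ norm_add_le _ _
        _ = ‖u‖ + α := by rw [norm_smul, hw1, Real.norm_eq_abs, abs_of_nonneg hα0, mul_one]
    have h4 : (c₁ + 1)⁻¹ * (c₁ + 1 + cstar) * ‖u‖ = ‖u‖ + α := by
      rw [hα]; field_simp
    linarith
end
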